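/- For every k_T-register transducer T over Boolean inputs I and outputs O (with initial register value d0) and every universal co-Büchi k_A-register automaton A over I ∪ O (with the same initial register value d0): there exists a word w ∈ L(T) rejected by A if and only if there exists a word w_B ∈ L(T_B) rejected by hide_A(AT_B@W). -/

import Mathlib

/-- A register word automaton over Boolean signals `P`, data-domain `D`, states `Q`,
and registers indexed by `R` (for a `k`-register automaton, `R = Fin k`).
The transition function reads a Boolean letter, an input-guard and an output-guard
(comparisons of the data-values of `i` resp. `o` with the registers) and yields
a set of (assignment, successor-state) pairs. -/
structure RegAutomaton (P D Q R : Type) where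
  d0 : D
  q0 : Q
  F : Set Q
  tr : Q → (P → Bool) → (R → Bool) → (R → Bool) → Set ((R → Bool) × Q)

/-- A data-path of a register automaton on the letter sequence `(l j, di j, dout j)`. -/
structure DataPath {P D Q R : Type} [DecidableEq D] (A : RegAutomaton P D Q R)
    (l : ℕ → P → Bool) (di dout : ℕ → D) where
  st : ℕ → Q
  regs : ℕ → R → D
  asgn : ℕ → R → Bool
  init_st : st 0 = A.q0
  init_regs : ∀ n, regs 0 n = A.d0
  step : ∀ j, (asgn j, st (j + 1)) ∈
    A.tr (st j) (l j) (fun n => decide (di j = regs j n)) (fun n => decide (dout j = regs j n))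
  update : ∀ j n, regs (j + 1) n = if asgn j n then di j else regs j n

/-- The register values of the automaton `T_all` along a word: registers start at `d0`
and the value of the data-input is stored into exactly the registers named by the
`Asgn^T` signals of the letter. -/
def tallRegs {D : Type} {kT : ℕ} (d0 : D) (asg : ℕ → Fin kT → Bool) (di : ℕ → D) :
    ℕ → Fin kT → D
  | 0 => fun _ => d0
  | j + 1 => fun n => if asg j n then di j else tallRegs d0 asg di j n

/-- The product `AT = A ⊗ T_all` of a universal co-Büchi `k_A`-register automaton `A`
over `I ∪ O` with the deterministic automaton `T_all` (`k_T` fresh registers, fresh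
signals `Asgn^T` modelled by `Fin kT`): states are `Q × Bool` (the Boolean component
records whether the `T_all`-component is still in `q0`, i.e. not yet in `⊥`); the
co-Büchi set is `F^A × {q0,⊥} ∪ Q^A × {⊥}`; the `A`-component follows `δ^A` on the
`R^A`-parts of the guards, and the `T_all`-component stays alive iff the output-guard
holds for at least one `R^T`-register, storing (while alive) the data-input into exactly
the registers named by the `Asgn^T` signals. -/
def prodTall {I O D Q : Type} {kA : ℕ} (A : RegAutomaton (I ⊕ O) D Q (Fin kA)) (kT : ℕ) :
    RegAutomaton ((I ⊕ O) ⊕ Fin kT) D (Q × Bool) (Fin kA ⊕ Fin kT) where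
  d0 := A.d0
  q0 := (A.q0, true)
  F := {s | s.1 ∈ A.F ∨ s.2 = false}
  tr := fun s l gi go =>
    {x | ((fun n => x.1 (Sum.inl n)), x.2.1) ∈
           A.tr s.1 (fun p => l (Sum.inl p)) (fun n => gi (Sum.inl n)) (fun n => go (Sum.inl n)) ∧
         x.2.2 = (s.2 && decide (∃ n : Fin kT, go (Sum.inr n) = true)) ∧
         ∀ n : Fin kT, x.1 (Sum.inr n) = (x.2.2 && l (Sum.inr n))}

/-- The transition relation of the verifier: its states are partitions of the
register set (modelled as setoids); the guard letter must respect the current partition,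
and the successor partition is determined by the assignment letter. -/
def VTrans {R : Type} (pa pa' : Setoid R) (gi go a : R → Bool) : Prop :=
  (∀ m n : R, pa.r m n → gi m = gi n ∧ go m = go n) ∧
  (∀ m n : R, ¬ pa.r m n → ¬(gi m = true ∧ gi n = true) ∧ ¬(go m = true ∧ go n = true)) ∧
  (∀ m n : R, pa'.r m n ↔
    ((a m = true ∧ a n = true) ∨ (a m = false ∧ a n = true ∧ gi m = true) ∨
     (a m = true ∧ a n = false ∧ gi n = true) ∨ (a m = false ∧ a n = false ∧ pa.r m n)))

/-- A Boolean path of the automaton `AT_B @ W`, over the signals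
`I ∪ O ∪ Asgn^T ∪ G_i^A ∪ G_i^T ∪ O_{k_T} ∪ Asgn^A ∪ Asgn^T`:
`lIO` is the `2^(I∪O)` part, `asgnTP` the raw `Asgn^T` signals of `AT`'s letter,
`gi` the input-guard letter over `R^A ∪ R^T`, `ok : Fin kT` the `O_{k_T}`-encoded
register index replacing the output-guard, and `asgn` the assignment letter over
`R^A ∪ R^T`.  A step requires some output-guard `g_o` whose `R^T`-part contains the
chosen register `ok j`, a joint transition of the Boolean associate of `AT = A ⊗ T_all`,
and a verifier transition on the partitions of `R^A ∪ R^T` (starting from the one-block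
partition `⊤`). -/
structure WPath {I O D Q : Type} {kA : ℕ} (A : RegAutomaton (I ⊕ O) D Q (Fin kA))
    (kT : ℕ) where
  st : ℕ → Q × Bool
  part : ℕ → Setoid (Fin kA ⊕ Fin kT)
  lIO : ℕ → (I ⊕ O) → Bool
  asgnTP : ℕ → Fin kT → Bool
  gi : ℕ → (Fin kA ⊕ Fin kT) → Bool
  ok : ℕ → Fin kT
  asgn : ℕ → (Fin kA ⊕ Fin kT) → Bool
  init_st : st 0 = (A.q0, true)
  init_part : part 0 = ⊤
  step : ∀ j, ∃ go : (Fin kA ⊕ Fin kT) → Bool,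
    go (Sum.inr (ok j)) = true ∧
    (asgn j, st (j + 1)) ∈
      (prodTall A kT).tr (st j) (Sum.elim (lIO j) (asgnTP j)) (gi j) go ∧
    VTrans (part j) (part (j + 1)) (gi j) go (asgn j)

/-- A data-path of `AT = A ⊗ T_all` corresponds to a Boolean path of `AT_B @ W` iff they
visit the same states, carry the same `2^(I ∪ O ∪ Asgn^T)`-letters, the input-guard and
assignment signals encode the comparisons and assignments of the data-path at every step,
and the `O_{k_T}`-letter at each step encodes some register `r^T_j` whose current value
equals the data-path's value of the data-output at that step. -/
def CorrW {I O D Q : Type} [DecidableEq D] {kA kT : ℕ}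
    {A : RegAutomaton (I ⊕ O) D Q (Fin kA)}
    {l : ℕ → ((I ⊕ O) ⊕ Fin kT) → Bool} {di dout : ℕ → D}
    (dp : DataPath (prodTall A kT) l di dout) (wp : WPath A kT) : Prop :=
  (∀ j, wp.st j = dp.st j) ∧
  (∀ j p, wp.lIO j p = l j (Sum.inl p)) ∧
  (∀ j n, wp.asgnTP j n = l j (Sum.inr n)) ∧
  (∀ j r, wp.gi j r = decide (di j = dp.regs j r)) ∧
  (∀ j, wp.asgn j = dp.asgn j) ∧
  (∀ j, dout j = dp.regs j (Sum.inr (wp.ok j)))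

/-- A path of the automaton `hide_A(AT_B @ W)`, over the visible signals
`I ∪ O ∪ Asgn^T ∪ G_i^T ∪ O_{k_T} ∪ Asgn^T`: same states as `AT_B @ W`; a step on a
letter exists iff `AT_B @ W` has a transition on some letter agreeing with it on the
visible signals (the hidden signals `G_i^A` and `Asgn^A` are existentially chosen). -/
structure HPath {I O D Q : Type} {kA : ℕ} (A : RegAutomaton (I ⊕ O) D Q (Fin kA))
    (kT : ℕ) where
  st : ℕ → Q × Bool
  part : ℕ → Setoid (Fin kA ⊕ Fin kT)
  lIO : ℕ → (I ⊕ O) → Bool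
  asgnTP : ℕ → Fin kT → Bool
  giT : ℕ → Fin kT → Bool
  ok : ℕ → Fin kT
  asgnT : ℕ → Fin kT → Bool
  init_st : st 0 = (A.q0, true)
  init_part : part 0 = ⊤
  step : ∀ j, ∃ (giA : Fin kA → Bool) (asgnA : Fin kA → Bool)
      (go : (Fin kA ⊕ Fin kT) → Bool),
    go (Sum.inr (ok j)) = true ∧
    (Sum.elim asgnA (asgnT j), st (j + 1)) ∈
      (prodTall A kT).tr (st j) (Sum.elim (lIO j) (asgnTP j)) (Sum.elim giA (giT j)) go ∧
    VTrans (part j) (part (j + 1)) (Sum.elim giA (giT j)) go (Sum.elim asgnA (asgnT j))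

/-- A path of `AT_B @ W` corresponds to a path of `hide_A(AT_B @ W)` iff they visit the
same states and their letters agree on the visible signals
`I ∪ O ∪ Asgn^T ∪ G_i^T ∪ O_{k_T} ∪ Asgn^T`. -/
def CorrWH {I O D Q : Type} {kA kT : ℕ} {A : RegAutomaton (I ⊕ O) D Q (Fin kA)}
    (wp : WPath A kT) (hp : HPath A kT) : Prop :=
  (∀ j, hp.st j = wp.st j) ∧ (∀ j, hp.part j = wp.part j) ∧
  (∀ j, hp.lIO j = wp.lIO j) ∧ (∀ j, hp.asgnTP j = wp.asgnTP j) ∧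
  (∀ j n, hp.giT j n = wp.gi j (Sum.inr n)) ∧
  (∀ j, hp.ok j = wp.ok j) ∧
  (∀ j n, hp.asgnT j n = wp.asgn j (Sum.inr n))

/-- A `k`-register transducer with Boolean inputs `I`, Boolean outputs `O`,
data-domain `D` and (possibly infinite) state set `S`. -/
structure RegTransducer (I O D S : Type) (k : ℕ) where
  s0 : S
  d0 : D
  tr : S → (I → Bool) → (Fin k → Bool) → (O → Bool) × Fin k × (Fin k → Bool) × S

/-- `(lio, di, dout)` is a word of the register transducer `T`
(an element of `L(T) ⊆ (2^(I∪O) × D × D)^ω`). -/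
def IsWordOf {I O D S : Type} [DecidableEq D] {kT : ℕ} (T : RegTransducer I O D S kT)
    (lio : ℕ → (I ⊕ O) → Bool) (di dout : ℕ → D) : Prop :=
  ∃ (st : ℕ → S) (regs : ℕ → Fin kT → D),
    st 0 = T.s0 ∧ (∀ n, regs 0 n = T.d0) ∧
    ∀ j,
      let r := T.tr (st j) (fun a => lio j (Sum.inl a)) (fun n => decide (di j = regs j n))
      st (j + 1) = r.2.2.2 ∧ (∀ b, lio j (Sum.inr b) = r.1 b) ∧
      dout j = regs j r.2.1 ∧
      (∀ n, regs (j + 1) n = if r.2.2.1 n then di j else regs j n)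

/-- `(inp, giT, outp, asgnT, ok)` is a word of the Boolean associate `T_B` of `T`:
a register-less deterministic transducer with Boolean inputs `I ∪ G_i^T` and Boolean
outputs `O ∪ Asgn^T ∪ O_{k_T}`. -/
def IsBoolWordOf {I O D S : Type} {kT : ℕ} (T : RegTransducer I O D S kT)
    (inp : ℕ → I → Bool) (giT : ℕ → Fin kT → Bool)
    (outp : ℕ → O → Bool) (asgnT : ℕ → Fin kT → Bool) (ok : ℕ → Fin kT) : Prop :=
  ∃ st : ℕ → S, st 0 = T.s0 ∧
    ∀ j,
      let r := T.tr (st j) (inp j) (giT j)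
      st (j + 1) = r.2.2.2 ∧ outp j = r.1 ∧ ok j = r.2.1 ∧ asgnT j = r.2.2.1


section Helpers
variable {R D : Type}

def kerS (f : R → D) : Setoid R :=
  ⟨fun m n => f m = f n, ⟨fun _ => rfl, Eq.symm, Eq.trans⟩⟩

lemma kerS_r (f : R → D) (m n : R) : (kerS f).r m n ↔ f m = f n := Iff.rfl

lemma vtrans_ker [DecidableEq D] (creg : R → D) (di dout : D) (asgn : R → Bool) :
    VTrans (kerS creg) (kerS fun r => if asgn r = true then di else creg r)
      (fun r => decide (di = creg r)) (fun r => decide (dout = creg r)) asgn := by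
  refine ⟨?_, ?_, ?_⟩
  · intro m n h
    replace h : creg m = creg n := h
    constructor <;> simp [h]
  · intro m n h
    replace h : ¬ creg m = creg n := h
    constructor
    · rintro ⟨h1, h2⟩
      exact h ((of_decide_eq_true h1).symm.trans (of_decide_eq_true h2))
    · rintro ⟨h1, h2⟩
      exact h ((of_decide_eq_true h1).symm.trans (of_decide_eq_true h2))
  · intro m n
    show (if asgn m = true then di else creg m) = (if asgn n = true then di else creg n) ↔ _
    cases hm : asgn m <;> cases hn : asgn n
    · simp [hm, hn, kerS_r]
    · simp only [hm, hn]
      simp [decide_eq_true_eq]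
      exact eq_comm
    · simp only [hm, hn]
      simp [decide_eq_true_eq]
    · simp [hm, hn]

open Classical in
noncomputable def pickD [Finite R] [Infinite D] (gi : R → Bool) (creg : R → D) : D :=
  if h : ∃ r, gi r = true then creg h.choose
  else ((Set.finite_range creg).infinite_compl.nonempty).choose

lemma realize_aux (pa : Setoid R) (g : R → Bool)
    (hconst : ∀ m n, pa.r m n → g m = g n)
    (hdist : ∀ m n, ¬ pa.r m n → ¬(g m = true ∧ g n = true))
    (creg : R → D) (inv : ∀ m n, pa.r m n ↔ creg m = creg n)
    (r₀ : R) (h0 : g r₀ = true) : ∀ r, g r = true ↔ creg r₀ = creg r := by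
  intro r
  constructor
  · intro hr
    by_cases hp : pa.r r₀ r
    · exact (inv r₀ r).mp hp
    · exact absurd ⟨h0, hr⟩ (hdist r₀ r hp)
  · intro he
    rw [← hconst r₀ r ((inv r₀ r).mpr he)]; exact h0

lemma pickD_real [Finite R] [Infinite D] (pa pa' : Setoid R) (gi go asgn : R → Bool)
    (hV : VTrans pa pa' gi go asgn) (creg : R → D)
    (inv : ∀ m n, pa.r m n ↔ creg m = creg n) :
    ∀ r, gi r = true ↔ pickD gi creg = creg r := by
  unfold pickD
  split_ifs with h
  · exact realize_aux pa gi (fun m n hm => (hV.1 m n hm).1)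
      (fun m n hm => (hV.2.1 m n hm).1) creg inv h.choose h.choose_spec
  · intro r
    constructor
    · intro hr; exact absurd ⟨r, hr⟩ h
    · intro he
      have hs := ((Set.finite_range creg).infinite_compl.nonempty).choose_spec
      simp only [Set.mem_compl_iff, Set.mem_range, not_exists] at hs
      exact absurd he.symm (hs r)

lemma inv_step [DecidableEq D] (pa pa' : Setoid R) (gi go asgn : R → Bool)
    (hV : VTrans pa pa' gi go asgn) (creg : R → D)
    (inv : ∀ m n, pa.r m n ↔ creg m = creg n) (di : D)
    (hreal : ∀ r, gi r = true ↔ di = creg r) :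
    ∀ m n, pa'.r m n ↔
      (if asgn m = true then di else creg m) = (if asgn n = true then di else creg n) := by
  intro m n
  rw [hV.2.2 m n]
  cases hm : asgn m <;> cases hn : asgn n
  · simp only [hm, hn]; simp [inv m n]
  · simp only [hm, hn]; simp [hreal m]; exact eq_comm.symm
  · simp only [hm, hn]; simp [hreal n]
  · simp only [hm, hn]; simp

lemma bool_eq_decide (b : Bool) (p : Prop) [Decidable p] (h : b = true ↔ p) :
    b = decide p := by
  cases b
  · symm; rw [decide_eq_false_iff_not, ← h]; simp
  · symm; rw [decide_eq_true_eq]; exact h.mp rfl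

end Helpers

/-- for every `k_T`-register transducer `T` and universal co-Büchi
`k_A`-register automaton `A` over `I ∪ O` (with the same initial register value):
some word of `T` is rejected by `A` (some data-path of `A` on it visits `F` infinitely
often) iff some word of the Boolean associate `T_B` is rejected by `hide_A(AT_B @ W)`
(some path of `hide_A(AT_B @ W)` carrying that word visits the co-Büchi set
`F^A × {q0,⊥} ∪ Q^A × {⊥}` infinitely often). -/
theorem stmt12 (D I O Q S : Type) [Infinite D] [DecidableEq D]
    [Finite I] [Finite O] [Finite Q]
    (kA kT : ℕ) (hkT : 1 ≤ kT)
    (A : RegAutomaton (I ⊕ O) D Q (Fin kA)) (T : RegTransducer I O D S kT)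
    (hd0 : T.d0 = A.d0) :
    (∃ (lio : ℕ → (I ⊕ O) → Bool) (di dout : ℕ → D),
        IsWordOf T lio di dout ∧
        ∃ dp : DataPath A lio di dout, ∀ N, ∃ j, N ≤ j ∧ dp.st j ∈ A.F) ↔
    (∃ (inp : ℕ → I → Bool) (giT : ℕ → Fin kT → Bool) (outp : ℕ → O → Bool)
        (asgnT : ℕ → Fin kT → Bool) (ok : ℕ → Fin kT),
        IsBoolWordOf T inp giT outp asgnT ok ∧
        ∃ hp : HPath A kT,
          (∀ j, hp.lIO j = Sum.elim (inp j) (outp j)) ∧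
          (∀ j, hp.asgnTP j = asgnT j) ∧
          (∀ j, hp.giT j = giT j) ∧
          (∀ j, hp.ok j = ok j) ∧
          (∀ j, hp.asgnT j = asgnT j) ∧
          ∀ N, ∃ j, N ≤ j ∧ ((hp.st j).1 ∈ A.F ∨ (hp.st j).2 = false)) := by
  constructor
  · rintro ⟨lio, di, dout, ⟨Tst, Tregs, hT0, hTr0, hTstep⟩, dp, hF⟩
    classical
    set Tr : ℕ → (O → Bool) × Fin kT × (Fin kT → Bool) × S := fun j =>
      T.tr (Tst j) (fun a => lio j (Sum.inl a)) (fun n => decide (di j = Tregs j n)) with hTr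
    set creg : ℕ → (Fin kA ⊕ Fin kT) → D := fun j => Sum.elim (dp.regs j) (Tregs j) with hcreg
    refine ⟨fun j a => lio j (Sum.inl a), fun j n => decide (di j = Tregs j n),
      fun j b => lio j (Sum.inr b), fun j => (Tr j).2.2.1, fun j => (Tr j).2.1,
      ⟨Tst, hT0, fun j => ?_⟩, ?_⟩
    · obtain ⟨h1, h2, h3, h4⟩ := hTstep j
      exact ⟨h1, funext fun b => h2 b, rfl, rfl⟩
    · refine ⟨⟨fun j => (dp.st j, true), fun j => kerS (creg j), lio,
        fun j => (Tr j).2.2.1, fun j n => decide (di j = Tregs j n),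
        fun j => (Tr j).2.1, fun j => (Tr j).2.2.1, by simp only [dp.init_st], ?_, fun j => ?_⟩,
        ?_, fun j => rfl, fun j => rfl, fun j => rfl, fun j => rfl, ?_⟩
      · -- init_part
        apply Setoid.ext
        intro m n
        have hall : ∀ r, creg 0 r = A.d0 := by
          rintro (r | r)
          · simp [hcreg, dp.init_regs]
          · simp [hcreg, hTr0, hd0]
        constructor
        · intro _; trivial
        · intro _; show creg 0 m = creg 0 n; rw [hall m, hall n]
      · -- step
        obtain ⟨h1, h2, h3, h4⟩ := hTstep j
        refine ⟨fun n => decide (di j = dp.regs j n), dp.asgn j,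
          fun r => decide (dout j = creg j r), ?_, ⟨?_, ?_, ?_⟩, ?_⟩
        · show decide (dout j = creg j (Sum.inr (Tr j).2.1)) = true
          simp only [hcreg, Sum.elim_inr]
          exact decide_eq_true h3
        · exact dp.step j
        · show true = (true && decide (∃ n : Fin kT, decide (dout j = creg j (Sum.inr n)) = true))
          simp only [Bool.true_and, decide_eq_true_eq]
          symm
          rw [decide_eq_true_eq]
          exact ⟨(Tr j).2.1, h3⟩
        · intro n
          show (Tr j).2.2.1 n = (true && (Tr j).2.2.1 n)
          simp
        · -- VTrans
          have hg : (Sum.elim (fun n => decide (di j = dp.regs j n))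
              (fun n => decide (di j = Tregs j n)) : Fin kA ⊕ Fin kT → Bool)
              = fun r => decide (di j = creg j r) := by
            funext r; cases r <;> rfl
          have ha : kerS (creg (j + 1)) =
              kerS (fun r => if (Sum.elim (dp.asgn j) ((Tr j).2.2.1) : Fin kA ⊕ Fin kT → Bool) r = true
                then di j else creg j r) := by
            congr 1
            funext r
            cases r with
            | inl n => simp [hcreg, dp.update j n]
            | inr n => simp [hcreg, h4 n]; rfl
          beta_reduce
          rw [hg, ha]
          exact vtrans_ker (creg j) (di j) (dout j) _
      · intro j; funext p; cases p <;> rfl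
      · intro N
        obtain ⟨j, hj, hFj⟩ := hF N
        exact ⟨j, hj, Or.inl hFj⟩
  · rintro ⟨inp, giT, outp, asgnT, ok, ⟨Tst, hT0, hTstep⟩, hp,
      hlio, hasgnTP, hgiT, hok, hasgnT, hF⟩
    classical
    choose giA asgnA go hgo hmem hV using hp.step
    let creg : ℕ → (Fin kA ⊕ Fin kT) → D := fun j => Nat.rec (motive := fun _ => (Fin kA ⊕ Fin kT) → D) (fun _ => A.d0)
      (fun j c r => if Sum.elim (asgnA j) (hp.asgnT j) r = true
        then pickD (Sum.elim (giA j) (hp.giT j)) c else c r) j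
    let di : ℕ → D := fun j => pickD (Sum.elim (giA j) (hp.giT j)) (creg j)
    let dout : ℕ → D := fun j => creg j (Sum.inr (hp.ok j))
    have inv : ∀ j m n, (hp.part j).r m n ↔ creg j m = creg j n := by
      intro j
      induction j with
      | zero =>
          intro m n
          rw [hp.init_part]
          exact ⟨fun _ => rfl, fun _ => trivial⟩
      | succ j ih =>
          have hreal := pickD_real _ _ _ _ _ (hV j) (creg j) ih
          exact fun m n => inv_step _ _ _ _ _ (hV j) (creg j) ih (di j) hreal m n
    have hgireal : ∀ j r, Sum.elim (giA j) (hp.giT j) r = true ↔ di j = creg j r :=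
      fun j => pickD_real _ _ _ _ _ (hV j) (creg j) (inv j)
    have hgoreal : ∀ j r, go j r = true ↔ dout j = creg j r := fun j =>
      realize_aux (hp.part j) (go j) (fun m n h => ((hV j).1 m n h).2)
        (fun m n h => ((hV j).2.1 m n h).2) (creg j) (inv j) (Sum.inr (hp.ok j)) (hgo j)
    have halive : ∀ j, (hp.st j).2 = true := by
      intro j
      induction j with
      | zero => rw [hp.init_st]
      | succ j ih =>
          have h2 := (hmem j).2.1
          rw [h2, ih]
          simp only [Bool.true_and, decide_eq_true_eq]
          exact ⟨hp.ok j, hgo j⟩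
    refine ⟨fun j => Sum.elim (inp j) (outp j), di, dout,
      ⟨Tst, fun j n => creg j (Sum.inr n), hT0, fun n => by simp [creg, hd0], fun j => ?_⟩,
      ⟨fun j => (hp.st j).1, fun j n => creg j (Sum.inl n), asgnA,
        by simp only [hp.init_st], fun n => rfl, fun j => ?_, fun j n => rfl⟩, ?_⟩
    · -- IsWordOf step
      obtain ⟨h1, h2, h3, h4⟩ := hTstep j
      have hg : (fun n : Fin kT => (decide (di j = creg j (Sum.inr n)) : Bool)) = giT j := by
        funext n
        rw [← bool_eq_decide (Sum.elim (giA j) (hp.giT j) (Sum.inr n)) (di j = creg j (Sum.inr n)) (hgireal j (Sum.inr n))]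
        show hp.giT j n = giT j n
        rw [hgiT]
      have hr : T.tr (Tst j) (fun a => Sum.elim (inp j) (outp j) (Sum.inl a))
          (fun n => decide (di j = creg j (Sum.inr n))) = T.tr (Tst j) (inp j) (giT j) := by
        rw [hg]; rfl
      refine ⟨?_, ?_, ?_, ?_⟩
      · rw [hr]; exact h1
      · intro b; rw [hr]; exact congrFun h2 b
      · show creg j (Sum.inr (hp.ok j)) = _
        rw [hr, hok, h3]
      · intro n
        rw [hr]
        show (if Sum.elim (asgnA j) (hp.asgnT j) (Sum.inr n) = true
          then di j else creg j (Sum.inr n)) = _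
        have : Sum.elim (asgnA j) (hp.asgnT j) (Sum.inr n) = (T.tr (Tst j) (inp j) (giT j)).2.2.1 n := by
          show hp.asgnT j n = _
          rw [hasgnT, congrFun h4 n]
        rw [this]
    · -- DataPath step
      have h := (hmem j).1
      have e2 : (fun n => Sum.elim (giA j) (hp.giT j) (Sum.inl n)) =
          fun n => decide (di j = creg j (Sum.inl n)) :=
        funext fun n => bool_eq_decide _ _ (hgireal j (Sum.inl n))
      have e3 : (fun n => go j (Sum.inl n)) = fun n => decide (dout j = creg j (Sum.inl n)) :=
        funext fun n => bool_eq_decide _ _ (hgoreal j (Sum.inl n))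
      rw [hlio j, e2, e3] at h
      exact h
    · -- co-Büchi
      intro N
      obtain ⟨j, hj, hFj⟩ := hF N
      refine ⟨j, hj, ?_⟩
      rcases hFj with h | h
      · exact h
      · rw [halive j] at h; cases h
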